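/- If the negative parts of the jumps of f are summable (Σ_{k=1}^∞ max(−j_k, 0) < ∞) and f is bounded above on [0, t₀), then the positive parts are also summable (Σ_{k=1}^∞ max(j_k, 0) < ∞) and the left limit lim_{t → t₀⁻} f(t) exists and equals f(0) − t₀ + Σ_{k=1}^∞ j_k. -/

import Mathlib

open Filter Set

/-- let `0 < t_1 < t_2 < ⋯ < t₀` with `t_k → t₀`, and let
`f : [0, t₀) → ℝ` be right-continuous, have left limits `fm k = f(t_k⁻)` at every
`t_k`, and satisfy `f' = -1` off the collision times.  If the negative parts of the
jumps `j_k = f(t_k) − f(t_k⁻)` are summable and `f` is bounded above on `[0, t₀)`,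
then the positive parts are also summable and
`lim_{t → t₀⁻} f(t) = f(0) − t₀ + ∑ k, j_k`. -/
theorem left_limit_of_summable_negative_jumps (t0 : ℝ) (ht0 : 0 < t0)
    (tc : ℕ → ℝ) (htc0 : 0 < tc 0) (htc_mono : StrictMono tc)
    (htc_lt : ∀ k, tc k < t0) (htc_lim : Tendsto tc atTop (nhds t0))
    (f : ℝ → ℝ) (fm : ℕ → ℝ)
    (hf_rc : ∀ t, 0 ≤ t → t < t0 →
      Tendsto f (nhdsWithin t (Ici t)) (nhds (f t)))
    (hf_ll : ∀ k, Tendsto f (nhdsWithin (tc k) (Iio (tc k))) (nhds (fm k)))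
    (hf_deriv : ∀ t, 0 ≤ t → t < t0 → t ∉ range tc →
      HasDerivWithinAt f (-1) (Ico 0 t0) t)
    (hneg_summable : Summable (fun k => max (-(f (tc k) - fm k)) 0))
    (hbdd : ∃ M : ℝ, ∀ t, 0 ≤ t → t < t0 → f t ≤ M) :
    Summable (fun k => max (f (tc k) - fm k) 0) ∧
      Tendsto f (nhdsWithin t0 (Iio t0))
        (nhds (f 0 - t0 + ∑' k, (f (tc k) - fm k))) := by
  set j : ℕ → ℝ := fun k => f (tc k) - fm k with hjdef
  set S : ℕ → ℝ := fun n => ∑ k ∈ Finset.range n, j k with hSdef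
  -- f y + y is constant on open intervals avoiding the jump times
  have key : ∀ a b : ℝ, 0 ≤ a → b ≤ t0 → (∀ k, tc k ∉ Ioo a b) →
      ∀ x ∈ Ioo a b, ∀ y ∈ Ioo a b, f y + y = f x + x := by
    intro a b ha hb hno x hx y hy
    have hsub : Ioo a b ⊆ Ico 0 t0 := fun z hz => ⟨ha.trans hz.1.le, hz.2.trans_le hb⟩
    have hderiv : ∀ z ∈ Ioo a b,
        HasDerivWithinAt (fun t => f t + t) ((fun _ => (0:ℝ)) z) (Ioo a b) z := by
      intro z hz
      have h1 : HasDerivWithinAt f (-1) (Ico 0 t0) z :=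
        hf_deriv z (ha.trans hz.1.le) (hz.2.trans_le hb)
          (by rintro ⟨k, rfl⟩; exact hno k hz)
      have h2 := (h1.mono hsub).add (hasDerivWithinAt_id z (Ioo a b))
      have h3 : HasDerivWithinAt (fun t => f t + t) ((-1:ℝ) + 1) (Ioo a b) z := h2
      rw [show (-1:ℝ) + 1 = 0 by norm_num] at h3
      exact h3
    have hC : ∀ z ∈ Ioo a b, ‖(fun _ => (0:ℝ)) z‖ ≤ 0 := by intro z _; simp
    have := Convex.norm_image_sub_le_of_norm_hasDerivWithin_le hderiv hC
      (convex_Ioo a b) hx hy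
    have h0 : ‖(f y + y) - (f x + x)‖ ≤ 0 := by simpa using this
    have := norm_nonneg ((f y + y) - (f x + x))
    have : ‖(f y + y) - (f x + x)‖ = 0 := le_antisymm h0 this
    have := norm_eq_zero.mp this
    linarith [sub_eq_zero.mp this]
  -- On each segment [a, tc k) with no jump times inside, f t = f a - (t - a),
  -- and the left limit satisfies fm k = f a - (tc k - a).
  have seg : ∀ (a : ℝ) (k : ℕ), 0 ≤ a → a < tc k → (∀ m, tc m ∉ Ioo a (tc k)) →
      (∀ x ∈ Ico a (tc k), f x = f a - (x - a)) ∧ fm k = f a - (tc k - a) := by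
    intro a k ha hak hno
    have hbt0 : tc k ≤ t0 := (htc_lt k).le
    have hat0 : a < t0 := hak.trans_le hbt0
    -- pick a reference point in the interval
    obtain ⟨x, hx⟩ : ∃ x, x ∈ Ioo a (tc k) := ⟨(a + tc k) / 2, Set.mem_Ioo.mpr ⟨by linarith, by linarith⟩⟩
    set c : ℝ := f x + x with hc
    have hconst : ∀ y ∈ Ioo a (tc k), f y = c - y := by
      intro y hy
      have := key a (tc k) ha hbt0 hno x hx y hy
      simp only [hc]; linarith
    -- value at the left endpoint via right-continuity
    have hNeBot_a : (nhdsWithin a (Ioo a (tc k))).NeBot := by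
      apply mem_closure_iff_nhdsWithin_neBot.mp
      rw [closure_Ioo hak.ne]
      exact ⟨le_rfl, hak.le⟩
    have hfa : f a = c - a := by
      have h1 : Tendsto f (nhdsWithin a (Ioo a (tc k))) (nhds (f a)) :=
        (hf_rc a ha hat0).mono_left (nhdsWithin_mono a (fun z hz => hz.1.le))
      have h2 : Tendsto f (nhdsWithin a (Ioo a (tc k))) (nhds (c - a)) := by
        have h3 : Tendsto (fun y : ℝ => c - y) (nhdsWithin a (Ioo a (tc k))) (nhds (c - a)) :=
          (tendsto_const_nhds.sub tendsto_id).mono_left nhdsWithin_le_nhds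
        exact h3.congr' (by
          filter_upwards [self_mem_nhdsWithin] with y hy using (hconst y hy).symm)
      exact tendsto_nhds_unique h1 h2
    -- value of the left limit at the right endpoint
    have hNeBot_b : (nhdsWithin (tc k) (Ioo a (tc k))).NeBot := by
      apply mem_closure_iff_nhdsWithin_neBot.mp
      rw [closure_Ioo hak.ne]
      exact ⟨hak.le, le_rfl⟩
    have hfm : fm k = c - tc k := by
      have h1 : Tendsto f (nhdsWithin (tc k) (Ioo a (tc k))) (nhds (fm k)) :=
        (hf_ll k).mono_left (nhdsWithin_mono _ (fun z hz => hz.2))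
      have h2 : Tendsto f (nhdsWithin (tc k) (Ioo a (tc k))) (nhds (c - tc k)) := by
        have h3 : Tendsto (fun y : ℝ => c - y) (nhdsWithin (tc k) (Ioo a (tc k)))
            (nhds (c - tc k)) :=
          (tendsto_const_nhds.sub tendsto_id).mono_left nhdsWithin_le_nhds
        exact h3.congr' (by
          filter_upwards [self_mem_nhdsWithin] with y hy using (hconst y hy).symm)
      exact tendsto_nhds_unique h1 h2
    refine ⟨fun y hy => ?_, by linarith⟩
    rcases eq_or_lt_of_le hy.1 with rfl | h
    · ring
    · have := hconst y ⟨h, hy.2⟩; linarith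
  have hno0 : ∀ m, tc m ∉ Ioo 0 (tc 0) := by
    intro m hm
    exact absurd hm.2 (not_lt.mpr (htc_mono.monotone (Nat.zero_le m)))
  have hnoI : ∀ n m, tc m ∉ Ioo (tc n) (tc (n + 1)) := by
    intro n m hm
    have h1 : n < m := htc_mono.lt_iff_lt.mp hm.1
    exact absurd hm.2 (not_lt.mpr (htc_mono.monotone h1))
  have htcpos : ∀ n, 0 < tc n := fun n => htc0.trans_le (htc_mono.monotone (Nat.zero_le n))
  have hseg0 := seg 0 0 le_rfl htc0 hno0
  have hsegn : ∀ n, (∀ x ∈ Ico (tc n) (tc (n + 1)), f x = f (tc n) - (x - tc n)) ∧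
      fm (n + 1) = f (tc n) - (tc (n + 1) - tc n) :=
    fun n => seg (tc n) (n + 1) (htcpos n).le (htc_mono (Nat.lt_succ_self n)) (hnoI n)
  have hjval : ∀ k, f (tc k) = fm k + j k := by intro k; simp [hjdef]
  -- value at the jump times
  have hfval : ∀ n, f (tc n) = f 0 - tc n + S (n + 1) := by
    intro n
    induction n with
    | zero =>
      have h1 := hseg0.2
      have h2 := hjval 0
      have h3 : S (0 + 1) = j 0 := by simp [hSdef]
      linarith
    | succ m ih =>
      have h1 := (hsegn m).2
      have h2 := hjval (m + 1)
      have h3 : S (m + 2) = S (m + 1) + j (m + 1) := by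
        simp [hSdef, Finset.sum_range_succ]
      linarith
  -- value on intervals between jump times
  have hint : ∀ n, ∀ t, tc n ≤ t → t < tc (n + 1) → f t = f 0 - t + S (n + 1) := by
    intro n t h1 h2
    have h3 := (hsegn n).1 t ⟨h1, h2⟩
    have h4 := hfval n
    linarith
  -- summability of the positive parts
  obtain ⟨M, hM⟩ := hbdd
  have hf0M : f 0 ≤ M := hM 0 le_rfl ht0
  set C : ℝ := ∑' k, max (-(j k)) 0 with hC
  have hSbound : ∀ n, S n ≤ M - f 0 + t0 := by
    intro n
    cases n with
    | zero => simp [hSdef]; linarith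
    | succ m =>
      have h1 := hfval m
      have h2 := hM (tc m) (htcpos m).le (htc_lt m)
      have h3 := (htc_lt m).le
      linarith
  have hpos_summable : Summable (fun k => max (j k) 0) := by
    apply summable_of_sum_range_le (c := (M - f 0 + t0) + C) (fun k => le_max_right _ _)
    intro n
    have h1 : ∑ k ∈ Finset.range n, max (j k) 0 =
        S n + ∑ k ∈ Finset.range n, max (-(j k)) 0 := by
      rw [hSdef, ← Finset.sum_add_distrib]
      apply Finset.sum_congr rfl
      intro k _
      rcases le_total (j k) 0 with h | h
      · rw [max_eq_right h, max_eq_left (by linarith)]; ring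
      · rw [max_eq_left h, max_eq_right (by linarith)]; ring
    rw [h1]
    have h2 : ∑ k ∈ Finset.range n, max (-(j k)) 0 ≤ C :=
      Summable.sum_le_tsum _ (fun k _ => le_max_right _ _) hneg_summable
    have h3 := hSbound n
    linarith
  refine ⟨hpos_summable, ?_⟩
  have hj_summable : Summable j := by
    have h := hpos_summable.sub hneg_summable
    have heq : (fun k => max (j k) 0 - max (-(j k)) 0) = j := by
      funext k; exact max_zero_sub_max_neg_zero_eq_self (j k)
    rwa [heq] at h
  have hStendsto : Tendsto S atTop (nhds (∑' k, j k)) := hj_summable.hasSum.tendsto_sum_nat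
  rw [Metric.tendsto_nhdsWithin_nhds]
  intro ε hε
  obtain ⟨n0, hn0⟩ := (Metric.tendsto_atTop.mp hStendsto) (ε / 2) (by linarith)
  refine ⟨min (t0 - tc n0) (ε / 2), lt_min (by linarith [htc_lt n0]) (by linarith), ?_⟩
  intro x hx hdist
  have hx' : x < t0 := hx
  have hd1 : t0 - x < min (t0 - tc n0) (ε / 2) := by
    rw [Real.dist_eq] at hdist
    have := abs_lt.mp hdist
    linarith [this.1]
  have hxgt : tc n0 < x := by have := lt_min_iff.mp hd1; linarith [this.1]
  have hxe : t0 - x < ε / 2 := (lt_min_iff.mp hd1).2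
  -- find the index n with tc n ≤ x < tc (n+1)
  have hex : ∃ k, x < tc k := by
    have := (htc_lim.eventually (eventually_gt_nhds hx')).exists
    exact this
  classical
  have hmspec : x < tc (Nat.find hex) := Nat.find_spec hex
  have hmgt : n0 < Nat.find hex := by
    by_contra h
    push_neg at h
    have : tc (Nat.find hex) ≤ tc n0 := htc_mono.monotone h
    linarith
  obtain ⟨n, hmn⟩ : ∃ n, Nat.find hex = n + 1 := ⟨Nat.find hex - 1, by omega⟩
  rw [hmn] at hmspec hmgt
  have hlen : tc n ≤ x := by
    have := Nat.find_min hex (show n < Nat.find hex by omega)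
    exact not_lt.mp this
  have hfx : f x = f 0 - x + S (n + 1) := hint n x hlen hmspec
  have hS1 : dist (S (n + 1)) (∑' k, j k) < ε / 2 := hn0 (n + 1) (by omega)
  rw [Real.dist_eq] at hS1 ⊢
  rw [hfx]
  have h1 := abs_lt.mp hS1
  rw [abs_lt]
  constructor <;> linarith [h1.1, h1.2]
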